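/- Let M ∈ ℂ^{n×n} be invertible, let Λ ∈ ℂ^{n×n} be diagonal, let ε ∈ (0,1), let Λ̄ be the spectrally clipped diagonal matrix obtained from Λ with margin ε, and set Â = M Λ̄ M⁻¹. Then the discrete-time system x_{k+1} = Â x_k is asymptotically stable: for every initial vector x₀ ∈ ℂ^n, the sequence Â^k x₀ converges to 0 as k → ∞. -/

import Mathlib

/- STATEMENT 5: If `M` is invertible, `Λ = diagonal d`, `ε ∈ (0,1)`, `Λ̄` is the spectrally
clipped diagonal matrix obtained from `Λ` with margin `ε`, and `Â = M Λ̄ M⁻¹`, then the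
discrete-time system `x_{k+1} = Â x_k` is asymptotically stable: for every initial vector
`x₀ ∈ ℂ^n`, the sequence `Â^k x₀` converges to `0` as `k → ∞`. -/

open Matrix Filter

/-- The scalar spectral-clipping map with margin `ε`:
`z ↦ (1−ε)·z/|z|` if `|z| ≥ 1`, and `z ↦ z` if `|z| < 1`. -/
noncomputable def clipEntry (ε : ℝ) (z : ℂ) : ℂ :=
  if 1 ≤ ‖z‖ then ((1 - ε : ℝ) : ℂ) * z / (‖z‖ : ℂ) else z

lemma clipEntry_norm_lt (ε : ℝ) (hε0 : 0 < ε) (hε1 : ε < 1) (z : ℂ) :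
    ‖clipEntry ε z‖ < 1 := by
  unfold clipEntry
  split_ifs with h
  · have hz : ‖z‖ ≠ 0 := by positivity
    rw [norm_div, norm_mul]
    rw [Complex.norm_real, Complex.norm_real, Real.norm_eq_abs, Real.norm_eq_abs]
    rw [abs_of_nonneg (by linarith), abs_of_nonneg (by positivity)]
    rw [div_lt_one (by positivity)]
    nlinarith [norm_nonneg z]
  · linarith [not_le.mp h]

theorem spectral_clipping_asymptotically_stable (n : ℕ) (hn : 1 ≤ n)
    (M : Matrix (Fin n) (Fin n) ℂ) (hM : IsUnit M) (d : Fin n → ℂ)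
    (ε : ℝ) (hε0 : 0 < ε) (hε1 : ε < 1) (x₀ : Fin n → ℂ) :
    Tendsto
      (fun k : ℕ =>
        ((M * Matrix.diagonal (fun i => clipEntry ε (d i)) * M⁻¹) ^ k) *ᵥ x₀)
      atTop (nhds 0) := by
  set c : Fin n → ℂ := fun i => clipEntry ε (d i) with hc
  have hdet : IsUnit M.det := (Matrix.isUnit_iff_isUnit_det M).mp hM
  have hMinv : M⁻¹ * M = 1 := Matrix.nonsing_inv_mul M hdet
  have hconj : ∀ k : ℕ, (M * Matrix.diagonal c * M⁻¹) ^ k =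
      M * (Matrix.diagonal c) ^ k * M⁻¹ := by
    intro k
    induction k with
    | zero => simp [Matrix.mul_nonsing_inv M hdet]
    | succ k ih =>
        rw [pow_succ, pow_succ, ih]
        calc M * Matrix.diagonal c ^ k * M⁻¹ * (M * Matrix.diagonal c * M⁻¹)
            = M * Matrix.diagonal c ^ k * (M⁻¹ * M) * Matrix.diagonal c * M⁻¹ := by
              simp only [Matrix.mul_assoc]
          _ = M * (Matrix.diagonal c ^ k * Matrix.diagonal c) * M⁻¹ := by
              rw [hMinv]; simp only [Matrix.mul_one, Matrix.mul_assoc]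
  have hdiagpow : ∀ k : ℕ, (Matrix.diagonal c) ^ k =
      Matrix.diagonal (fun i => (c i) ^ k) := by
    intro k
    rw [Matrix.diagonal_pow]; rfl
  have hdiag : Tendsto (fun k : ℕ => Matrix.diagonal (fun i => (c i) ^ k))
      atTop (nhds (0 : Matrix (Fin n) (Fin n) ℂ)) := by
    refine tendsto_pi_nhds.mpr ?_
    intro i
    rw [tendsto_pi_nhds]
    intro j
    by_cases hij : i = j
    · subst hij
      simpa using tendsto_pow_atTop_nhds_zero_of_norm_lt_one
        (show ‖c i‖ < 1 from clipEntry_norm_lt ε hε0 hε1 (d i))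
    · simp [Matrix.diagonal_apply_ne _ hij]
  have hcont : Continuous (fun A : Matrix (Fin n) (Fin n) ℂ => (M * A * M⁻¹) *ᵥ x₀) := by
    apply Continuous.matrix_mulVec
    · exact (continuous_const.matrix_mul continuous_id).matrix_mul continuous_const
    · exact continuous_const
  have := (hcont.tendsto 0).comp hdiag
  simp only [Function.comp_def] at this
  have heq : (fun k : ℕ => ((M * Matrix.diagonal c * M⁻¹) ^ k) *ᵥ x₀)
      = fun k : ℕ => (M * Matrix.diagonal (fun i => (c i) ^ k) * M⁻¹) *ᵥ x₀ := by
    funext k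
    rw [hconj k, hdiagpow k]
  rw [heq]
  simpa using this
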